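/- arXiv:2402.09374 — 3 statements merged into one kernel-verified Lean document; each statement's English description precedes it below -/
import Mathlib

section
/- For every cumulative distribution function F on the real line with F(0) = 0, one has ∫_{(0,1/e]} (-log u)^3 · log(-log u) dF(u) = 3 ∫_{(0,1/e]} F(u) · (log u)^2 / u · (log(-log u) + 1/3) du. -/
open MeasureTheory Real Set Filter

lemma aux_ftc {u : ℝ} (hu : 0 < u) (huc : u ≤ exp (-1)) :
    ∫ t in u..(exp (-1)), 3 * ((Real.log t) ^ 2 / t * (Real.log (-Real.log t) + 1 / 3))
      = (-Real.log u) ^ 3 * Real.log (-Real.log u) := by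
  have key : ∀ t ∈ Set.uIcc u (exp (-1)),
      HasDerivAt (fun s => -((-Real.log s) ^ 3 * Real.log (-Real.log s)))
        (3 * ((Real.log t) ^ 2 / t * (Real.log (-Real.log t) + 1 / 3))) t := by
    intro t ht
    rw [Set.uIcc_of_le huc] at ht
    have ht0 : 0 < t := lt_of_lt_of_le hu ht.1
    have htlog : Real.log t ≤ -1 := by
      have := Real.log_le_log ht0 ht.2
      rwa [Real.log_exp] at this
    have hlne : Real.log t ≠ 0 := by linarith
    have hLne : -Real.log t ≠ 0 := by simpa using hlne
    have h1 : HasDerivAt (fun s : ℝ => -Real.log s) (-t⁻¹) t :=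
      (Real.hasDerivAt_log (ne_of_gt ht0)).neg
    have h2 : HasDerivAt (fun s : ℝ => (-Real.log s) ^ 3) (3 * (-Real.log t) ^ 2 * (-t⁻¹)) t := by
      simpa using h1.fun_pow 3
    have h3 : HasDerivAt (fun s : ℝ => Real.log (-Real.log s)) ((-Real.log t)⁻¹ * (-t⁻¹)) t :=
      (Real.hasDerivAt_log hLne).comp (h₂ := Real.log) t h1
    have h4 := (h2.mul h3).neg
    refine h4.congr_deriv ?_
    have e1 : (-Real.log t) ^ 3 * (-Real.log t)⁻¹ = (-Real.log t) ^ 2 := by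
      rw [pow_succ, mul_assoc, mul_inv_cancel₀ hLne, mul_one]
    linear_combination (t⁻¹) * e1
  have hint : IntervalIntegrable
      (fun t => 3 * ((Real.log t) ^ 2 / t * (Real.log (-Real.log t) + 1 / 3))) volume u (exp (-1)) := by
    apply ContinuousOn.intervalIntegrable
    intro t ht
    rw [Set.uIcc_of_le huc] at ht
    have ht0 : 0 < t := lt_of_lt_of_le hu ht.1
    have htlog : Real.log t ≤ -1 := by
      have := Real.log_le_log ht0 ht.2
      rwa [Real.log_exp] at this
    have hLne : -Real.log t ≠ 0 := by intro h; rw [neg_eq_zero] at h; linarith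
    apply ContinuousAt.continuousWithinAt
    have hl : ContinuousAt Real.log t := Real.continuousAt_log (ne_of_gt ht0)
    have hll : ContinuousAt (fun s => Real.log (-Real.log s)) t :=
      ContinuousAt.comp (g := Real.log) (f := fun s => -Real.log s) (Real.continuousAt_log hLne) hl.neg
    exact (((hl.pow 2).div continuousAt_id (ne_of_gt ht0)).mul (hll.add continuousAt_const)).const_mul 3
  rw [intervalIntegral.integral_eq_sub_of_hasDerivAt key hint]
  simp [Real.log_exp]

lemma aux_int {u : ℝ} (hu : 0 < u) (huc : u ≤ exp (-1)) :
    IntervalIntegrable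
      (fun t => 3 * ((Real.log t) ^ 2 / t * (Real.log (-Real.log t) + 1 / 3))) volume u (exp (-1)) := by
  apply ContinuousOn.intervalIntegrable
  intro t ht
  rw [Set.uIcc_of_le huc] at ht
  have ht0 : 0 < t := lt_of_lt_of_le hu ht.1
  have htlog : Real.log t ≤ -1 := by
    have := Real.log_le_log ht0 ht.2
    rwa [Real.log_exp] at this
  have hLne : -Real.log t ≠ 0 := by intro h; rw [neg_eq_zero] at h; linarith
  apply ContinuousAt.continuousWithinAt
  have hl : ContinuousAt Real.log t := Real.continuousAt_log (ne_of_gt ht0)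
  have hll : ContinuousAt (fun s => Real.log (-Real.log s)) t :=
    ContinuousAt.comp (g := Real.log) (f := fun s => -Real.log s) (Real.continuousAt_log hLne) hl.neg
  exact (((hl.pow 2).div continuousAt_id (ne_of_gt ht0)).mul (hll.add continuousAt_const)).const_mul 3

lemma aux_meas_h0 : Measurable (fun t : ℝ => (Real.log t) ^ 2 / t * (Real.log (-Real.log t) + 1 / 3)) := by
  measurability

lemma aux_meas_g : Measurable (fun t : ℝ => (-Real.log t) ^ 3 * Real.log (-Real.log t)) := by
  measurability

/-- Lemma 2(1): for a CDF `F` with `F 0 = 0`,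
`∫_{(0,1/e]} (-log u)^3 log(-log u) dF(u)
  = 3 ∫_{(0,1/e]} F(u) (log u)^2 / u (log(-log u) + 1/3) du`. -/
theorem stmt_0 (F : StieltjesFunction ℝ)
    (hF0 : Tendsto F atBot (nhds 0)) (hF1 : Tendsto F atTop (nhds 1))
    (hF_zero : F 0 = 0) :
    ∫ u in Ioc (0 : ℝ) (exp (-1)), (-Real.log u) ^ 3 * Real.log (-Real.log u) ∂F.measure
      = 3 * ∫ u in Ioc (0 : ℝ) (exp (-1)),
          F u * ((Real.log u) ^ 2 / u) * (Real.log (-Real.log u) + 1 / 3) := by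
  have hc0 : (0:ℝ) < exp (-1) := exp_pos _
  set c : ℝ := exp (-1) with hcdef
  set h₀ : ℝ → ℝ := fun t => (Real.log t) ^ 2 / t * (Real.log (-Real.log t) + 1 / 3) with hh₀def
  set g : ℝ → ℝ := fun t => (-Real.log t) ^ 3 * Real.log (-Real.log t) with hgdef
  have hbase : ∀ t ∈ Ioc (0:ℝ) c, Real.log t ≤ -1 := by
    intro t ht
    have := Real.log_le_log ht.1 ht.2
    rwa [Real.log_exp] at this
  have hll_nonneg : ∀ t ∈ Ioc (0:ℝ) c, 0 ≤ Real.log (-Real.log t) := by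
    intro t ht
    exact Real.log_nonneg (by linarith [hbase t ht])
  have hg_nonneg : ∀ t ∈ Ioc (0:ℝ) c, 0 ≤ g t := by
    intro t ht
    have h1 := hbase t ht
    exact mul_nonneg (pow_nonneg (by linarith) 3) (hll_nonneg t ht)
  have hh₀_nonneg : ∀ t ∈ Ioc (0:ℝ) c, 0 ≤ h₀ t := by
    intro t ht
    have := hll_nonneg t ht
    have := ht.1
    have ht0 : 0 < t := ht.1
    have hd : (0:ℝ) ≤ (Real.log t) ^ 2 / t := by positivity
    exact mul_nonneg hd (by linarith [hll_nonneg t ht])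
  have hF_nonneg : ∀ t ∈ Ioc (0:ℝ) c, 0 ≤ F t := by
    intro t ht
    rw [← hF_zero]
    exact F.mono ht.1.le
  -- Step 1: express g as an integral of h over Ico u c
  have step1 : ∀ u ∈ Ioc (0:ℝ) c, ENNReal.ofReal (g u)
      = ∫⁻ t in Ico u c, ENNReal.ofReal (3 * h₀ t) := by
    intro u hu
    have hII := aux_int hu.1 hu.2
    have hInt : IntegrableOn (fun t => 3 * h₀ t) (Ico u c) := by
      have h1 : IntegrableOn (fun t => 3 * h₀ t) (Ioc u c) :=
        (intervalIntegrable_iff_integrableOn_Ioc_of_le hu.2).mp hII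
      exact h1.congr_set_ae Ico_ae_eq_Ioc
    have hnn : 0 ≤ᵐ[volume.restrict (Ico u c)] fun t => 3 * h₀ t := by
      apply ae_restrict_of_forall_mem measurableSet_Ico
      intro t ht
      have hmem : t ∈ Ioc (0:ℝ) c := ⟨lt_of_lt_of_le hu.1 ht.1, ht.2.le⟩
      have := hh₀_nonneg t hmem
      show (0:ℝ) ≤ 3 * h₀ t
      linarith
    rw [← ofReal_integral_eq_lintegral_ofReal hInt hnn]
    congr 1
    rw [MeasureTheory.setIntegral_congr_set Ico_ae_eq_Ioc, ← intervalIntegral.integral_of_le hu.2]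
    exact (aux_ftc hu.1 hu.2).symm
  -- the kernel for Fubini
  set f : ℝ → ℝ → ENNReal := fun u t => (Ico u c).indicator (fun s => ENNReal.ofReal (3 * h₀ s)) t with hfdef
  have hf_meas : AEMeasurable (Function.uncurry f) ((F.measure.restrict (Ioc 0 c)).prod volume) := by
    have heq : Function.uncurry f = Set.indicator {q : ℝ × ℝ | q.1 ≤ q.2 ∧ q.2 < c}
        (fun q => ENNReal.ofReal (3 * h₀ q.2)) := by
      ext p
      simp only [Function.uncurry, hfdef, Set.indicator_apply, Set.mem_Ico, Set.mem_setOf_eq]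
    rw [heq]
    apply Measurable.aemeasurable
    apply Measurable.indicator
    · exact (ENNReal.measurable_ofReal.comp ((aux_meas_h0.const_mul 3).comp measurable_snd))
    · have : {q : ℝ × ℝ | q.1 ≤ q.2 ∧ q.2 < c} = {q : ℝ × ℝ | q.1 ≤ q.2} ∩ {q : ℝ × ℝ | q.2 < c} := rfl
      rw [this]
      exact (measurableSet_le measurable_fst measurable_snd).inter (measurable_snd measurableSet_Iio)
  -- inner integral after swapping
  have inner : ∀ t : ℝ, ∫⁻ u in Ioc (0:ℝ) c, f u t ∂F.measure
      = Set.indicator (Ioo (0:ℝ) c) (fun s => ENNReal.ofReal (3 * h₀ s) * ENNReal.ofReal (F s)) t := by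
    intro t
    by_cases ht : t ∈ Ioo (0:ℝ) c
    · have hpt : ∀ u, f u t = Set.indicator (Iic t) (fun _ => ENNReal.ofReal (3 * h₀ t)) u := by
        intro u
        by_cases hut : u ≤ t
        · simp [hfdef, Set.indicator_apply, Set.mem_Ico, Set.mem_Iic, hut, ht.2]
        · simp [hfdef, Set.indicator_apply, Set.mem_Ico, Set.mem_Iic, hut]
      simp_rw [hpt]
      rw [lintegral_indicator measurableSet_Iic, Measure.restrict_restrict measurableSet_Iic]
      have hset : Iic t ∩ Ioc (0:ℝ) c = Ioc (0:ℝ) t := by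
        ext x
        simp only [Set.mem_inter_iff, Set.mem_Iic, Set.mem_Ioc]
        constructor
        · rintro ⟨h1, h2, h3⟩; exact ⟨h2, h1⟩
        · rintro ⟨h1, h2⟩; exact ⟨h2, h1, le_trans h2 ht.2.le⟩
      rw [hset, setLIntegral_const, F.measure_Ioc, hF_zero, sub_zero,
        Set.indicator_of_mem ht]
    · rw [Set.indicator_of_notMem ht]
      have hzero : ∀ u ∈ Ioc (0:ℝ) c, f u t = 0 := by
        intro u hu
        apply Set.indicator_of_notMem
        intro hmem
        rw [Set.mem_Ioo] at ht
        push_neg at ht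
        rcases Set.mem_Ico.mp hmem with ⟨h1, h2⟩
        have := ht (lt_of_lt_of_le hu.1 h1)
        linarith
      calc ∫⁻ u in Ioc (0:ℝ) c, f u t ∂F.measure
          = ∫⁻ _ in Ioc (0:ℝ) c, 0 ∂F.measure :=
            setLIntegral_congr_fun measurableSet_Ioc hzero
        _ = 0 := lintegral_zero
  -- the key identity via Tonelli
  have key : ∫⁻ u in Ioc (0:ℝ) c, ENNReal.ofReal (g u) ∂F.measure
      = ∫⁻ t in Ioc (0:ℝ) c, ENNReal.ofReal 3 * ENNReal.ofReal (F t * h₀ t) := by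
    calc ∫⁻ u in Ioc (0:ℝ) c, ENNReal.ofReal (g u) ∂F.measure
        = ∫⁻ u in Ioc (0:ℝ) c, (∫⁻ t in Ico u c, ENNReal.ofReal (3 * h₀ t)) ∂F.measure :=
          setLIntegral_congr_fun measurableSet_Ioc step1
      _ = ∫⁻ u in Ioc (0:ℝ) c, (∫⁻ t, f u t) ∂F.measure := by
          apply lintegral_congr
          intro u
          rw [hfdef]
          exact (lintegral_indicator measurableSet_Ico _).symm
      _ = ∫⁻ t, ∫⁻ u in Ioc (0:ℝ) c, f u t ∂F.measure := lintegral_lintegral_swap hf_meas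
      _ = ∫⁻ t, Set.indicator (Ioo (0:ℝ) c) (fun s => ENNReal.ofReal (3 * h₀ s) * ENNReal.ofReal (F s)) t := by
          exact lintegral_congr inner
      _ = ∫⁻ t in Ioo (0:ℝ) c, ENNReal.ofReal (3 * h₀ t) * ENNReal.ofReal (F t) :=
          lintegral_indicator measurableSet_Ioo _
      _ = ∫⁻ t in Ioc (0:ℝ) c, ENNReal.ofReal (3 * h₀ t) * ENNReal.ofReal (F t) :=
          setLIntegral_congr Ioo_ae_eq_Ioc
      _ = ∫⁻ t in Ioc (0:ℝ) c, ENNReal.ofReal 3 * ENNReal.ofReal (F t * h₀ t) := by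
          apply setLIntegral_congr_fun measurableSet_Ioc
          intro t ht
          dsimp only
          rw [ENNReal.ofReal_mul (by norm_num : (0:ℝ) ≤ 3), mul_assoc,
            ← ENNReal.ofReal_mul (hh₀_nonneg t ht), mul_comm (h₀ t) (F t)]
  -- final assembly
  have hFmeas : Measurable (F : ℝ → ℝ) := F.mono.measurable
  have lhs_eq : ∫ u in Ioc (0:ℝ) c, g u ∂F.measure
      = (∫⁻ u in Ioc (0:ℝ) c, ENNReal.ofReal (g u) ∂F.measure).toReal := by
    apply integral_eq_lintegral_of_nonneg_ae
    · exact ae_restrict_of_forall_mem measurableSet_Ioc hg_nonneg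
    · exact aux_meas_g.aestronglyMeasurable
  have rhs_eq : ∫ u in Ioc (0:ℝ) c, F u * h₀ u
      = (∫⁻ u in Ioc (0:ℝ) c, ENNReal.ofReal (F u * h₀ u)).toReal := by
    apply integral_eq_lintegral_of_nonneg_ae
    · exact ae_restrict_of_forall_mem measurableSet_Ioc
        (fun t ht => mul_nonneg (hF_nonneg t ht) (hh₀_nonneg t ht))
    · exact (hFmeas.mul aux_meas_h0).aestronglyMeasurable
  have hmulform : ∀ u : ℝ, F u * ((Real.log u) ^ 2 / u) * (Real.log (-Real.log u) + 1 / 3)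
      = F u * h₀ u := by
    intro u; rw [hh₀def]; ring
  calc ∫ u in Ioc (0:ℝ) c, g u ∂F.measure
      = (∫⁻ u in Ioc (0:ℝ) c, ENNReal.ofReal (g u) ∂F.measure).toReal := lhs_eq
    _ = (∫⁻ t in Ioc (0:ℝ) c, ENNReal.ofReal 3 * ENNReal.ofReal (F t * h₀ t)).toReal := by rw [key]
    _ = (ENNReal.ofReal 3 * ∫⁻ t in Ioc (0:ℝ) c, ENNReal.ofReal (F t * h₀ t)).toReal := by
        rw [lintegral_const_mul' _ _ ENNReal.ofReal_ne_top]
    _ = 3 * (∫⁻ t in Ioc (0:ℝ) c, ENNReal.ofReal (F t * h₀ t)).toReal := by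
        rw [ENNReal.toReal_mul, ENNReal.toReal_ofReal (by norm_num : (0:ℝ) ≤ 3)]
    _ = 3 * ∫ u in Ioc (0:ℝ) c, F u * h₀ u := by rw [rhs_eq]
    _ = 3 * ∫ u in Ioc (0:ℝ) c,
          F u * ((Real.log u) ^ 2 / u) * (Real.log (-Real.log u) + 1 / 3) := by
        congr 1
        exact (integral_congr_ae (ae_of_all _ fun u => (hmulform u))).symm
end

section
/- For every cumulative distribution function F on the real line with F(0) = 0, one has ∫_{(0,1/e]} (log u)^4 · log(-log u) dF(u) = 4 ∫_{(0,1/e]} F(u) · (-(log u)^3) / u · (log(-log u) + 1/4) du. -/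
open MeasureTheory Real Set Filter

noncomputable def hfun (t : ℝ) : ℝ :=
  -(Real.log t) ^ 3 / t * (4 * Real.log (-Real.log t) + 1)

lemma hfun_measurable : Measurable hfun := by
  have hl : Measurable Real.log := Real.measurable_log
  exact ((hl.pow_const 3).neg.div measurable_id).mul
    ((measurable_const.mul (hl.comp hl.neg)).add measurable_const)

lemma hfun_hasDeriv {t : ℝ} (ht0 : 0 < t) (ht1 : t < 1) :
    HasDerivAt (fun u => (Real.log u) ^ 4 * Real.log (-Real.log u)) (-hfun t) t := by
  have hlt : Real.log t < 0 := Real.log_neg ht0 ht1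
  have h1 : HasDerivAt Real.log t⁻¹ t := Real.hasDerivAt_log ht0.ne'
  have h3 : HasDerivAt (fun u => Real.log (-Real.log u)) (-t⁻¹ / (-Real.log t)) t :=
    h1.neg.log (neg_pos.2 hlt).ne'
  have h5 := (h1.pow 4).mul h3
  refine h5.congr_deriv ?_
  have ht' : t ≠ 0 := ht0.ne'
  have hl' : Real.log t ≠ 0 := hlt.ne
  unfold hfun
  rw [Pi.pow_apply]
  field_simp
  ring

lemma hfun_contOn : ContinuousOn hfun (Ioo (0:ℝ) 1) := by
  intro t ht
  have ht0 : t ≠ 0 := ht.1.ne'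
  have hlt : Real.log t ≠ 0 := (Real.log_neg ht.1 ht.2).ne
  have c1 : ContinuousAt Real.log t := Real.continuousAt_log ht0
  have c2 : ContinuousAt (fun u => Real.log (-Real.log u)) t :=
    c1.neg.log (neg_ne_zero.2 hlt)
  exact (((c1.pow 3).neg.div continuousAt_id ht0).mul
    ((continuousAt_const.mul c2).add continuousAt_const)).continuousWithinAt

lemma hfun_nonneg {t : ℝ} (ht0 : 0 < t) (htb : t ≤ Real.exp (-1)) : 0 ≤ hfun t := by
  have hlog : Real.log t ≤ -1 := by
    calc Real.log t ≤ Real.log (Real.exp (-1)) := Real.log_le_log ht0 htb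
    _ = -1 := Real.log_exp _
  have hL : 0 ≤ Real.log (-Real.log t) := Real.log_nonneg (by linarith)
  have hcube : (Real.log t) ^ 3 ≤ 0 := Odd.pow_nonpos ⟨1, by norm_num⟩ (by linarith)
  unfold hfun
  have : 0 ≤ -(Real.log t)^3 / t := div_nonneg (by linarith) ht0.le
  nlinarith

/-- Lemma 3(1): for a CDF `F` with `F 0 = 0`,
`∫_{(0,1/e]} (log u)^4 log(-log u) dF(u)
  = 4 ∫_{(0,1/e]} F(u) (-(log u)^3) / u (log(-log u) + 1/4) du`. -/
theorem stmt_2 (F : StieltjesFunction ℝ)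
    (hF0 : Tendsto F atBot (nhds 0)) (hF1 : Tendsto F atTop (nhds 1))
    (hF_zero : F 0 = 0) :
    ∫ u in Ioc (0 : ℝ) (exp (-1)), (Real.log u) ^ 4 * Real.log (-Real.log u) ∂F.measure
      = 4 * ∫ u in Ioc (0 : ℝ) (exp (-1)),
          F u * (-(Real.log u) ^ 3 / u) * (Real.log (-Real.log u) + 1 / 4) := by
  set b : ℝ := exp (-1) with hb
  have hb0 : 0 < b := exp_pos _
  have hb1 : b < 1 := by
    rw [hb]; exact exp_lt_one_iff.2 (by norm_num)
  have hlogb : Real.log b = -1 := Real.log_exp _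
  have hFnn : ∀ x, 0 ≤ F x := fun x =>
    le_of_tendsto hF0 (eventually_atBot.2 ⟨x, fun y hy => F.mono hy⟩)
  set g : ℝ → ℝ := fun u => (Real.log u) ^ 4 * Real.log (-Real.log u) with hg
  set K : ℝ → ENNReal := fun t => ENNReal.ofReal (hfun t) with hK
  -- nonnegativity of g on (0, b]
  have hgnn : ∀ u ∈ Ioc (0:ℝ) b, 0 ≤ g u := by
    intro u hu
    have hlog : Real.log u ≤ -1 := by
      calc Real.log u ≤ Real.log b := Real.log_le_log hu.1 hu.2
      _ = -1 := hlogb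
    exact mul_nonneg (by positivity) (Real.log_nonneg (by linarith))
  -- FTC: g x = ∫ t in Ioc x b, hfun t for x ∈ (0, b]
  have hftc : ∀ x ∈ Ioc (0:ℝ) b, g x = ∫ t in Ioc x b, hfun t := by
    intro x hx
    have hxb : x ≤ b := hx.2
    have hsub : uIcc x b ⊆ Ioo 0 1 := by
      rw [uIcc_of_le hxb]
      exact fun t ht => ⟨lt_of_lt_of_le hx.1 ht.1, lt_of_le_of_lt ht.2 hb1⟩
    have hint : IntervalIntegrable (fun t => -hfun t) volume x b :=
      ((hfun_contOn.mono hsub).neg).intervalIntegrable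
    have := intervalIntegral.integral_eq_sub_of_hasDerivAt
      (f := g) (f' := fun t => -hfun t)
      (fun t ht => hfun_hasDeriv (hsub ht).1 (hsub ht).2) hint
    have hgb : g b = 0 := by
      simp [hg, hlogb]
    rw [intervalIntegral.integral_neg] at this
    have : ∫ t in x..b, hfun t = g x := by linarith [this, hgb] 
    rw [← this, intervalIntegral.integral_of_le hxb]
  -- measurability
  have hgmeas : Measurable g := by
    have hl : Measurable Real.log := Real.measurable_log
    exact (hl.pow_const 4).mul (hl.comp hl.neg)
  have hfR : Measurable (fun u => F u * (-(Real.log u) ^ 3 / u) * (Real.log (-Real.log u) + 1 / 4)) := by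
    have hl : Measurable Real.log := Real.measurable_log
    exact ((F.mono.measurable).mul ((hl.pow_const 3).neg.div measurable_id)).mul
      ((hl.comp hl.neg).add measurable_const)
  have hRnn : ∀ u ∈ Ioc (0:ℝ) b,
      0 ≤ F u * (-(Real.log u) ^ 3 / u) * (Real.log (-Real.log u) + 1 / 4) := by
    intro u hu
    have hlog : Real.log u ≤ -1 := by
      calc Real.log u ≤ Real.log b := Real.log_le_log hu.1 hu.2
      _ = -1 := hlogb
    have h1 : (Real.log u) ^ 3 ≤ 0 := Odd.pow_nonpos ⟨1, by norm_num⟩ (by linarith)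
    have h2 : 0 ≤ Real.log (-Real.log u) := Real.log_nonneg (by linarith)
    have h3 : 0 ≤ -(Real.log u) ^ 3 / u := div_nonneg (by linarith) hu.1.le
    have h4 := mul_nonneg (hFnn u) h3
    nlinarith
  have hKmeas : Measurable K := hfun_measurable.ennreal_ofReal
  -- core lintegral identity via Tonelli
  have key : ∫⁻ x in Ioc (0:ℝ) b, ENNReal.ofReal (g x) ∂F.measure
      = ∫⁻ t in Ioc (0:ℝ) b, ENNReal.ofReal (F t * hfun t) := by
    have step1 : ∀ x ∈ Ioc (0:ℝ) b, ENNReal.ofReal (g x)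
        = ∫⁻ t in Ioc (0:ℝ) b, (Ioi x).indicator K t := by
      intro x hx
      have hI : IntegrableOn hfun (Ioc x b) := by
        have hsub : Icc x b ⊆ Ioo 0 1 := fun t ht =>
          ⟨lt_of_lt_of_le hx.1 ht.1, lt_of_le_of_lt ht.2 hb1⟩
        exact ((hfun_contOn.mono hsub).integrableOn_Icc).mono_set Ioc_subset_Icc_self
      have hset : Ioi x ∩ Ioc (0:ℝ) b = Ioc x b := by
        ext t; simp only [mem_inter_iff, mem_Ioi, mem_Ioc]
        constructor
        · rintro ⟨h1, _, h3⟩; exact ⟨h1, h3⟩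
        · rintro ⟨h1, h2⟩; exact ⟨h1, hx.1.trans h1, h2⟩
      rw [hftc x hx, ofReal_integral_eq_lintegral_ofReal hI
        ((ae_restrict_iff' measurableSet_Ioc).2
          (ae_of_all _ fun t ht => hfun_nonneg (lt_trans hx.1 ht.1) ht.2)),
        lintegral_indicator measurableSet_Ioi,
        Measure.restrict_restrict measurableSet_Ioi, hset]
    rw [setLIntegral_congr_fun measurableSet_Ioc step1]
    rw [lintegral_lintegral_swap]
    · have hae : ∀ᵐ t ∂(volume.restrict (Ioc (0:ℝ) b)), Function.leftLim F t = F t := by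
        apply ae_restrict_of_ae
        have h0 : volume {x | Function.leftLim F x ≠ F x} = 0 :=
          (F.countable_leftLim_ne).measure_zero _
        exact (ae_iff).2 (by simpa using h0)
      refine lintegral_congr_ae ?_
      filter_upwards [hae, ae_restrict_mem measurableSet_Ioc] with t hlim ht
      have hrw : (fun x => (Ioi x).indicator K t) = (Iio t).indicator (fun _ => K t) := by
        funext x
        by_cases hxt : x < t <;> simp [indicator_apply, hxt, Set.mem_Ioi, Set.mem_Iio]
      have hset2 : Iio t ∩ Ioc (0:ℝ) b = Ioo 0 t := by
        ext x; simp only [mem_inter_iff, mem_Iio, mem_Ioc, mem_Ioo]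
        constructor
        · rintro ⟨h1, h2, _⟩; exact ⟨h2, h1⟩
        · rintro ⟨h1, h2⟩; exact ⟨h2, h1, h2.le.trans ht.2⟩
      rw [hrw, lintegral_indicator measurableSet_Iio, setLIntegral_const,
        Measure.restrict_apply measurableSet_Iio, hset2, F.measure_Ioo, hlim, hF_zero]
      rw [ENNReal.ofReal_mul (hFnn t), sub_zero, mul_comm]
    · -- AEMeasurable of the uncurried function
      have : (Function.uncurry fun x t => (Ioi x).indicator K t)
          = fun p : ℝ × ℝ => if p.1 < p.2 then K p.2 else 0 := by
        funext p
        simp [Function.uncurry, indicator_apply, Set.mem_Ioi]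
      rw [this]
      exact (Measurable.ite (measurableSet_lt measurable_fst measurable_snd)
        (hKmeas.comp measurable_snd) measurable_const).aemeasurable
  -- assemble
  rw [integral_eq_lintegral_of_nonneg_ae
      ((ae_restrict_iff' measurableSet_Ioc).2 (ae_of_all _ hgnn))
      hgmeas.aestronglyMeasurable,
    integral_eq_lintegral_of_nonneg_ae
      ((ae_restrict_iff' measurableSet_Ioc).2 (ae_of_all _ hRnn))
      hfR.aestronglyMeasurable]
  have hfr_eq : ∀ u : ℝ, F u * (-(Real.log u) ^ 3 / u) * (Real.log (-Real.log u) + 1 / 4)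
      = 4⁻¹ * (F u * hfun u) := by
    intro u; unfold hfun; ring
  simp_rw [hfr_eq, ENNReal.ofReal_mul (by norm_num : (0:ℝ) ≤ 4⁻¹)]
  rw [lintegral_const_mul' _ _ ENNReal.ofReal_ne_top, key, ENNReal.toReal_mul,
    ENNReal.toReal_ofReal (by norm_num)]
  ring
end

section
/- If ξ is an exponentially distributed random variable with mean e^γ / c, where c > 0 and γ is the Euler–Mascheroni constant, then E[(log ξ)²] = (log c)² + π²/6. -/
open MeasureTheory ProbabilityTheory Real

open Set Filter Asymptotics
open scoped ENNReal NNReal Topology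

noncomputable section

private def f0 : ℝ → ℂ := fun t => (Real.exp (-t) : ℂ)
private def f1 : ℝ → ℂ := fun t => Real.log t • f0 t
private def f2 : ℝ → ℂ := fun t => Real.log t • f1 t

private lemma f0_top : f0 =O[atTop] (· ^ (-3 : ℝ)) := by
  rw [← isBigO_norm_left]
  simp_rw [f0, Complex.norm_real, isBigO_norm_left]
  simpa only [neg_one_mul] using (isLittleO_exp_neg_mul_rpow_atTop zero_lt_one _).isBigO

private lemma f0_bot : f0 =O[𝓝[>] (0:ℝ)] (· ^ (-(0:ℝ))) := by
  simp_rw [neg_zero, rpow_zero]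
  refine isBigO_const_of_tendsto (?_ : Tendsto _ _ (𝓝 (1 : ℂ))) one_ne_zero
  rw [(by simp : (1 : ℂ) = Real.exp (-0))]
  exact (Complex.continuous_ofReal.comp (Real.continuous_exp.comp continuous_neg)).continuousWithinAt

private lemma log_bot : Real.log =O[𝓝[>] (0:ℝ)] (· ^ (-(1/2) : ℝ)) := by
  have h := tendsto_log_mul_rpow_nhdsGT_zero (one_half_pos)
  refine IsLittleO.isBigO ?_
  rw [isLittleO_iff_tendsto']
  · refine h.congr' ?_
    filter_upwards [self_mem_nhdsWithin] with x (hx : 0 < x)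
    rw [rpow_neg hx.le, div_inv_eq_mul]
  · filter_upwards [self_mem_nhdsWithin] with x (hx : 0 < x) h0
    exact absurd h0 (by positivity)

private lemma f1_top : f1 =O[atTop] (· ^ (-2 : ℝ)) := by
  have h1 : Real.log =O[atTop] (· ^ (1:ℝ)) := (isLittleO_log_rpow_atTop one_pos).isBigO
  have h2 := f0_top
  have := h1.smul h2
  refine this.trans (IsBigO.of_bound 1 ?_)
  filter_upwards [eventually_gt_atTop (0:ℝ)] with t ht
  rw [smul_eq_mul, one_mul, ← rpow_add ht]
  norm_num

private lemma f1_bot : f1 =O[𝓝[>] (0:ℝ)] (· ^ (-(1/2) : ℝ)) := by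
  have := log_bot.smul f0_bot
  refine this.trans (IsBigO.of_bound 1 ?_)
  filter_upwards [self_mem_nhdsWithin] with t (ht : 0 < t)
  rw [smul_eq_mul, one_mul, ← rpow_add ht]
  norm_num

private lemma f0_loc : LocallyIntegrableOn f0 (Ioi 0) := by
  refine (Continuous.continuousOn ?_).locallyIntegrableOn measurableSet_Ioi
  exact Complex.continuous_ofReal.comp (Real.continuous_exp.comp continuous_neg)

private lemma f1_loc : LocallyIntegrableOn f1 (Ioi 0) := by
  refine ContinuousOn.locallyIntegrableOn ?_ measurableSet_Ioi
  refine ContinuousOn.fun_smul ?_ (Continuous.continuousOn ?_)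
  · exact fun x hx => (Real.continuousAt_log (ne_of_gt hx)).continuousWithinAt
  · exact Complex.continuous_ofReal.comp (Real.continuous_exp.comp continuous_neg)

private lemma hasDerivAt_mellin_f0 {s : ℂ} (hs0 : 0 < s.re) (hs3 : s.re < 3) :
    HasDerivAt (mellin f0) (mellin f1 s) s :=
  (mellin_hasDerivAt_of_isBigO_rpow f0_loc f0_top hs3 f0_bot (by simpa using hs0)).2

private lemma hasDerivAt_mellin_f1 :
    MellinConvergent f2 1 ∧ HasDerivAt (mellin f1) (mellin f2 1) 1 := by
  have := mellin_hasDerivAt_of_isBigO_rpow (s := (1:ℂ)) f1_loc f1_top (by norm_num) f1_bot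
    (by norm_num)
  exact this

private lemma mellin_f0_eq : mellin f0 = Complex.GammaIntegral :=
  (Complex.GammaIntegral_eq_mellin).symm

-- mellin at 1 is just the integral
private lemma mellin_at_one (f : ℝ → ℂ) : mellin f 1 = ∫ t in Ioi (0:ℝ), f t := by
  simp [mellin]

end

noncomputable section

open Complex in
private lemma gamma_eq_mellin_f0 : ∀ᶠ s : ℂ in 𝓝 1, Complex.Gamma s = mellin f0 s := by
  have hopen : IsOpen {s : ℂ | 0 < s.re} := isOpen_lt continuous_const Complex.continuous_re
  filter_upwards [hopen.mem_nhds (by norm_num : (0:ℝ) < (1:ℂ).re)] with s hs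
  rw [mellin_f0_eq, Complex.Gamma_eq_integral hs]

/-- deriv of complex Gamma agrees with mellin f1 near 1 -/
private lemma deriv_gamma_eq : ∀ᶠ s : ℂ in 𝓝 1, deriv Complex.Gamma s = mellin f1 s := by
  have hopen : IsOpen {s : ℂ | 0 < s.re ∧ s.re < 3} :=
    (isOpen_lt continuous_const Complex.continuous_re).inter (isOpen_lt Complex.continuous_re continuous_const)
  filter_upwards [hopen.mem_nhds (by norm_num : 0 < (1:ℂ).re ∧ (1:ℂ).re < 3)] with s hs
  have h1 : deriv (mellin f0) s = mellin f1 s := (hasDerivAt_mellin_f0 hs.1 hs.2).deriv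
  rw [← h1]
  apply Filter.EventuallyEq.deriv_eq
  have hopen2 : IsOpen {s : ℂ | 0 < s.re} := isOpen_lt continuous_const Complex.continuous_re
  filter_upwards [hopen2.mem_nhds hs.1] with z hz
  rw [mellin_f0_eq, Complex.Gamma_eq_integral hz]

private lemma hasDerivAt_deriv_gamma :
    HasDerivAt (deriv Complex.Gamma) (mellin f2 1) 1 :=
  hasDerivAt_mellin_f1.2.congr_of_eventuallyEq deriv_gamma_eq

private def I1 : ℝ := ∫ t in Ioi (0:ℝ), Real.log t * Real.exp (-t)
private def I2 : ℝ := ∫ t in Ioi (0:ℝ), (Real.log t) ^ 2 * Real.exp (-t)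

private lemma mellin_f1_one : mellin f1 1 = (I1 : ℂ) := by
  rw [mellin_at_one, I1]
  rw [show f1 = (fun t : ℝ => ((Real.log t * Real.exp (-t) : ℝ) : ℂ)) from
    funext fun t => by simp [f1, f0, Complex.real_smul]]
  exact integral_ofReal

private lemma mellin_f2_one : mellin f2 1 = (I2 : ℂ) := by
  rw [mellin_at_one, I2]
  rw [show f2 = (fun t : ℝ => (((Real.log t) ^ 2 * Real.exp (-t) : ℝ) : ℂ)) from
    funext fun t => by simp [f2, f1, f0, Complex.real_smul]; ring]
  exact integral_ofReal

private lemma I1_eq : I1 = -Real.eulerMascheroniConstant := by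
  have h1 : deriv Complex.Gamma 1 = -Real.eulerMascheroniConstant :=
    Complex.hasDerivAt_Gamma_one.deriv
  have h2 : deriv Complex.Gamma 1 = mellin f1 1 := deriv_gamma_eq.self_of_nhds
  rw [h2, mellin_f1_one] at h1
  exact_mod_cast h1

private lemma deriv2_gamma : deriv (deriv Complex.Gamma) 1 = (I2 : ℂ) := by
  rw [hasDerivAt_deriv_gamma.deriv, mellin_f2_one]

end

noncomputable section

private def G1 : ℝ → ℝ := fun x => (deriv Complex.Gamma x).re
private def G2 : ℝ → ℝ := fun x => (deriv (deriv Complex.Gamma) x).re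

private lemma gamma_ne_neg_nat {x : ℝ} (hx : 0 < x) : ∀ m : ℕ, (x:ℂ) ≠ -m := by
  intro m h
  have : x = -(m:ℝ) := by exact_mod_cast h
  have : (0:ℝ) < -(m:ℝ) := this ▸ hx
  have : (0:ℝ) ≤ (m:ℝ) := Nat.cast_nonneg m
  linarith

private lemma analytic_gamma : AnalyticOnNhd ℂ Complex.Gamma {s : ℂ | 0 < s.re} := by
  refine DifferentiableOn.analyticOnNhd (fun z hz => ?_)
    (isOpen_lt continuous_const Complex.continuous_re)
  exact (Complex.differentiableAt_Gamma z (by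
    intro m h
    have : z.re = -(m:ℕ) := by rw [h]; simp
    have hm : (0:ℝ) ≤ (m:ℝ) := Nat.cast_nonneg m
    simp only [Set.mem_setOf_eq] at hz
    rw [this] at hz; linarith)).differentiableWithinAt

private lemma hasDerivAt_G (x : ℝ) (hx : 0 < x) : HasDerivAt Real.Gamma (G1 x) x :=
  ((Complex.differentiableAt_Gamma _ (gamma_ne_neg_nat hx)).hasDerivAt).real_of_complex

private lemma hasDerivAt_G1 (x : ℝ) (hx : 0 < x) : HasDerivAt G1 (G2 x) x := by
  have h : AnalyticOnNhd ℂ (deriv Complex.Gamma) {s : ℂ | 0 < s.re} :=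
    analytic_gamma.deriv
  have hx' : ((x:ℂ)) ∈ {s : ℂ | 0 < s.re} := by simpa using hx
  exact ((h _ hx').differentiableAt.hasDerivAt).real_of_complex

private lemma G1_one : G1 1 = -Real.eulerMascheroniConstant := by
  have h1 : deriv Complex.Gamma 1 = -(Real.eulerMascheroniConstant:ℂ) := by
    exact_mod_cast Complex.hasDerivAt_Gamma_one.deriv
  simp only [G1]
  rw [show ((1:ℝ):ℂ) = 1 by norm_num, h1]
  simp

private lemma G2_one : G2 1 = I2 := by
  simp only [G2]
  rw [show ((1:ℝ):ℂ) = 1 by norm_num, deriv2_gamma]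
  simp

end

noncomputable section

private def ψ : ℝ → ℝ := fun x => G1 x / Real.Gamma x
private def dψ : ℝ → ℝ := fun x =>
  (G2 x * Real.Gamma x - G1 x * G1 x) / Real.Gamma x ^ 2

private def logG : ℝ → ℝ := fun y => Real.log (Real.Gamma y)

private lemma hasDerivAt_logG {x : ℝ} (hx : 0 < x) : HasDerivAt logG (ψ x) x :=
  (hasDerivAt_G x hx).log (Real.Gamma_pos_of_pos hx).ne'

private lemma hasDerivAt_ψ {x : ℝ} (hx : 0 < x) : HasDerivAt ψ (dψ x) x :=
  (hasDerivAt_G1 x hx).div (hasDerivAt_G x hx) (Real.Gamma_pos_of_pos hx).ne'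

/-! Reflection: `ψ x - ψ (1-x) + π * cos (π x)/ sin (π x) = 0` on `(0,1)`. -/

private def D1 : ℝ → ℝ := fun x =>
  ψ x - ψ (1 - x) + π * Real.cos (π * x) / Real.sin (π * x)

private lemma sin_pos_of_Ioo {x : ℝ} (hx : x ∈ Set.Ioo (0:ℝ) 1) : 0 < Real.sin (π * x) :=
  Real.sin_pos_of_pos_of_lt_pi (by nlinarith [Real.pi_pos, hx.1])
    (by nlinarith [Real.pi_pos, hx.2])

private lemma hasDerivAt_sin_comp (x : ℝ) :
    HasDerivAt (fun y => Real.sin (π * y)) (Real.cos (π * x) * π) x := by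
  have h : HasDerivAt (fun y : ℝ => π * y) π x := by
    simpa using (hasDerivAt_id x).const_mul π
  exact (Real.hasDerivAt_sin (π * x)).comp x h

private lemma hasDerivAt_F1 {x : ℝ} (hx : x ∈ Set.Ioo (0:ℝ) 1) :
    HasDerivAt (fun y => logG y + logG (1 - y) + Real.log (Real.sin (π * y))) (D1 x) x := by
  have h1 : HasDerivAt (fun y : ℝ => 1 - y) (-1) x := by
    exact (hasDerivAt_id x).const_sub 1
  have h2 : HasDerivAt (fun y => logG (1 - y)) (ψ (1 - x) * (-1)) x :=
    (hasDerivAt_logG (by linarith [hx.2])).comp x h1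
  have h3 : HasDerivAt (fun y => Real.log (Real.sin (π * y)))
      (Real.cos (π * x) * π / Real.sin (π * x)) x :=
    (hasDerivAt_sin_comp x).log (sin_pos_of_Ioo hx).ne'
  have := ((hasDerivAt_logG hx.1).add h2).add h3
  refine this.congr_deriv ?_
  simp only [D1]
  ring

private lemma D1_zero {x : ℝ} (hx : x ∈ Set.Ioo (0:ℝ) 1) : D1 x = 0 := by
  have hconst : ∀ y ∈ Set.Ioo (0:ℝ) 1,
      logG y + logG (1 - y) + Real.log (Real.sin (π * y)) = Real.log π := by
    intro y hy
    have hs := sin_pos_of_Ioo hy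
    have hg1 := Real.Gamma_pos_of_pos hy.1
    have hg2 := Real.Gamma_pos_of_pos (by linarith [hy.2] : (0:ℝ) < 1 - y)
    have hrefl := Real.Gamma_mul_Gamma_one_sub y
    have : Real.log (Real.Gamma y * Real.Gamma (1 - y)) = Real.log (π / Real.sin (π * y)) := by
      rw [hrefl]
    rw [Real.log_mul hg1.ne' hg2.ne', Real.log_div (by positivity) hs.ne'] at this
    simp only [logG]
    linarith
  have heq : (fun y => logG y + logG (1 - y) + Real.log (Real.sin (π * y)))
      =ᶠ[nhds x] (fun _ => Real.log π) := by
    filter_upwards [isOpen_Ioo.mem_nhds hx] with y hy using hconst y hy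
  have h := (hasDerivAt_F1 hx).congr_of_eventuallyEq heq.symm
  exact h.unique (hasDerivAt_const _ _)

private lemma hasDerivAt_D1 {x : ℝ} (hx : x ∈ Set.Ioo (0:ℝ) 1) :
    HasDerivAt D1 (dψ x + dψ (1 - x) +
      (-(Real.sin (π * x)) * π * π * Real.sin (π * x) -
        π * Real.cos (π * x) * (Real.cos (π * x) * π)) / Real.sin (π * x) ^ 2) x := by
  have h1 : HasDerivAt (fun y : ℝ => 1 - y) (-1) x := by
    exact (hasDerivAt_id x).const_sub 1
  have h2 : HasDerivAt (fun y => ψ (1 - y)) (dψ (1 - x) * (-1)) x :=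
    (hasDerivAt_ψ (by linarith [hx.2])).comp x h1
  have hcos : HasDerivAt (fun y => π * Real.cos (π * y)) (-(Real.sin (π * x)) * π * π) x := by
    have hl : HasDerivAt (fun y : ℝ => π * y) π x := by
      simpa using (hasDerivAt_id x).const_mul π
    have := ((Real.hasDerivAt_cos (π * x)).comp x hl).const_mul π
    refine this.congr_deriv ?_
    ring
  have h3 := hcos.div (hasDerivAt_sin_comp x) (sin_pos_of_Ioo hx).ne'
  have := ((hasDerivAt_ψ hx.1).sub h2).add h3
  refine this.congr_deriv ?_
  ring

private lemma dψ_half : dψ (1/2) = π ^ 2 / 2 := by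
  have hmem : (1/2 : ℝ) ∈ Set.Ioo (0:ℝ) 1 := by norm_num
  have heq : D1 =ᶠ[nhds (1/2:ℝ)] (fun _ => 0) := by
    filter_upwards [isOpen_Ioo.mem_nhds hmem] with y hy using D1_zero hy
  have h := (hasDerivAt_D1 hmem).congr_of_eventuallyEq heq.symm
  have h0 := h.unique (hasDerivAt_const _ _)
  have hs : Real.sin (π * (1/2)) = 1 := by
    rw [show π * (1/2 : ℝ) = π / 2 by ring, Real.sin_pi_div_two]
  have hc : Real.cos (π * (1/2)) = 0 := by
    rw [show π * (1/2 : ℝ) = π / 2 by ring, Real.cos_pi_div_two]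
  rw [hs, hc] at h0
  have : dψ (1/2 : ℝ) + dψ (1 - 1/2) - π ^ 2 = 0 := by
    rw [show (1:ℝ) - 1/2 = 1/2 by norm_num] at h0 ⊢
    nlinarith [h0]
  rw [show (1:ℝ) - 1/2 = 1/2 by norm_num] at this
  linarith

end

noncomputable section

/-! Duplication: `ψ x + ψ (x+1/2) - 2 ψ (2x) + 2 log 2 = 0` on `(0,∞)`. -/

private def D2 : ℝ → ℝ := fun x =>
  ψ x + ψ (x + 1/2) - ψ (2 * x) * 2 + 2 * Real.log 2

private lemma hasDerivAt_shift {x : ℝ} (hx : 0 < x) :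
    HasDerivAt (fun y => logG (y + 1/2)) (ψ (x + 1/2)) x := by
  have h : HasDerivAt (fun y : ℝ => y + 1/2) 1 x := (hasDerivAt_id x).add_const _
  simpa [Function.comp_def] using (hasDerivAt_logG (by linarith : (0:ℝ) < x + 1/2)).comp x h

private lemma hasDerivAt_double {x : ℝ} (hx : 0 < x) :
    HasDerivAt (fun y => logG (2 * y)) (ψ (2 * x) * 2) x := by
  have h : HasDerivAt (fun y : ℝ => 2 * y) 2 x := by
    simpa using (hasDerivAt_id x).const_mul 2
  exact (hasDerivAt_logG (by linarith : (0:ℝ) < 2 * x)).comp x h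

private lemma hasDerivAt_F2 {x : ℝ} (hx : 0 < x) :
    HasDerivAt (fun y => logG y + logG (y + 1/2) - logG (2 * y) - (1 - 2*y) * Real.log 2)
      (D2 x) x := by
  have h4 : HasDerivAt (fun y : ℝ => (1 - 2*y) * Real.log 2) (-2 * Real.log 2) x := by
    have : HasDerivAt (fun y : ℝ => 1 - 2*y) (-2) x := by
      simpa using ((hasDerivAt_id x).const_mul 2).const_sub 1
    simpa using this.mul_const (Real.log 2)
  have := (((hasDerivAt_logG hx).add (hasDerivAt_shift hx)).sub (hasDerivAt_double hx)).sub h4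
  refine this.congr_deriv ?_
  simp only [D2]
  ring

private lemma D2_zero {x : ℝ} (hx : 0 < x) : D2 x = 0 := by
  have hconst : ∀ y, 0 < y →
      logG y + logG (y + 1/2) - logG (2 * y) - (1 - 2*y) * Real.log 2
        = Real.log (Real.sqrt π) := by
    intro y hy
    have hg1 := Real.Gamma_pos_of_pos hy
    have hg2 := Real.Gamma_pos_of_pos (by linarith : (0:ℝ) < y + 1/2)
    have hg3 := Real.Gamma_pos_of_pos (by linarith : (0:ℝ) < 2 * y)
    have hdup := Real.Gamma_mul_Gamma_add_half y
    have hrpow : (0:ℝ) < (2:ℝ) ^ (1 - 2*y) := Real.rpow_pos_of_pos two_pos _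
    have hsq : (0:ℝ) < Real.sqrt π := Real.sqrt_pos.mpr Real.pi_pos
    have hlog : Real.log (Real.Gamma y * Real.Gamma (y + 1/2)) =
        Real.log (Real.Gamma (2*y) * (2:ℝ) ^ (1 - 2*y) * Real.sqrt π) := by
      rw [hdup]
    rw [Real.log_mul hg1.ne' hg2.ne', Real.log_mul (by positivity) hsq.ne',
      Real.log_mul hg3.ne' hrpow.ne', Real.log_rpow two_pos] at hlog
    simp only [logG]
    linarith
  have heq : (fun y => logG y + logG (y + 1/2) - logG (2 * y) - (1 - 2*y) * Real.log 2)
      =ᶠ[nhds x] (fun _ => Real.log (Real.sqrt π)) := by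
    filter_upwards [isOpen_Ioi.mem_nhds hx] with y hy using hconst y hy
  have h := (hasDerivAt_F2 hx).congr_of_eventuallyEq heq.symm
  exact h.unique (hasDerivAt_const _ _)

private lemma hasDerivAt_D2 {x : ℝ} (hx : 0 < x) :
    HasDerivAt D2 (dψ x + dψ (x + 1/2) - dψ (2 * x) * 4) x := by
  have h1 : HasDerivAt (fun y : ℝ => y + 1/2) 1 x := (hasDerivAt_id x).add_const _
  have h2 : HasDerivAt (fun y => ψ (y + 1/2)) (dψ (x + 1/2)) x := by
    simpa [Function.comp_def] using (hasDerivAt_ψ (by linarith : (0:ℝ) < x + 1/2)).comp x h1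
  have h3 : HasDerivAt (fun y : ℝ => 2 * y) 2 x := by
    simpa using (hasDerivAt_id x).const_mul 2
  have h4 : HasDerivAt (fun y => ψ (2 * y) * 2) (dψ (2 * x) * 2 * 2) x :=
    ((hasDerivAt_ψ (by linarith : (0:ℝ) < 2 * x)).comp x h3).mul_const 2
  have := (((hasDerivAt_ψ hx).add h2).sub h4).add_const (2 * Real.log 2)
  refine this.congr_deriv ?_
  ring

private lemma dψ_one : dψ 1 = π ^ 2 / 6 := by
  have heq : D2 =ᶠ[nhds (1/2:ℝ)] (fun _ => 0) := by
    filter_upwards [isOpen_Ioi.mem_nhds (by norm_num : (1/2:ℝ) ∈ Set.Ioi (0:ℝ))] with y hy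
      using D2_zero hy
  have h := (hasDerivAt_D2 (by norm_num : (0:ℝ) < 1/2)).congr_of_eventuallyEq heq.symm
  have h0 := h.unique (hasDerivAt_const _ _)
  rw [show (1/2:ℝ) + 1/2 = 1 by norm_num, show (2:ℝ) * (1/2) = 1 by norm_num] at h0
  have := dψ_half
  linarith

private lemma I2_eq : I2 = Real.eulerMascheroniConstant ^ 2 + π ^ 2 / 6 := by
  have h := dψ_one
  simp only [dψ, Real.Gamma_one, G1_one, G2_one] at h
  nlinarith [h]

end

noncomputable section

private lemma int_log_exp : IntegrableOn (fun t => Real.log t * Real.exp (-t)) (Ioi (0:ℝ)) := by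
  have mc1 : MellinConvergent f1 1 :=
    (mellin_hasDerivAt_of_isBigO_rpow (s := (1:ℂ)) f0_loc f0_top (by norm_num) f0_bot
      (by norm_num)).1
  have h : IntegrableOn f1 (Ioi (0:ℝ)) := by
    have := mc1
    simp only [MellinConvergent, sub_self, Complex.cpow_zero, one_smul] at this
    exact this
  have h2 : IntegrableOn (fun x => RCLike.re (f1 x)) (Ioi (0:ℝ)) := h.re
  refine h2.congr_fun (fun t _ => ?_) measurableSet_Ioi
  simp [f1, f0, Complex.real_smul, ← Complex.ofReal_neg, Complex.exp_ofReal_re]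

private lemma int_log_sq_exp :
    IntegrableOn (fun t => (Real.log t) ^ 2 * Real.exp (-t)) (Ioi (0:ℝ)) := by
  have h : IntegrableOn f2 (Ioi (0:ℝ)) := by
    have := hasDerivAt_mellin_f1.1
    simp only [MellinConvergent, sub_self, Complex.cpow_zero, one_smul] at this
    exact this
  have h2 : IntegrableOn (fun x => RCLike.re (f2 x)) (Ioi (0:ℝ)) := h.re
  refine h2.congr_fun (fun t _ => ?_) measurableSet_Ioi
  simp [f2, f1, f0, Complex.real_smul, ← Complex.ofReal_neg, Complex.exp_ofReal_re]
  ring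

private lemma int_exp : IntegrableOn (fun t => Real.exp (-t)) (Ioi (0:ℝ)) := by
  have := exp_neg_integrableOn_Ioi (0:ℝ) (one_pos)
  simpa using this

private lemma integral_exp_neg : ∫ t in Ioi (0:ℝ), Real.exp (-t) = 1 := by
  simpa using integral_exp_neg_Ioi_zero

/-- The key computation: for `L : ℝ`,
`∫ t in Ioi 0, exp (-t) * (log t - L)^2 = I2 - 2 L I1 + L^2`. -/
private lemma key_integral (L : ℝ) :
    ∫ t in Ioi (0:ℝ), Real.exp (-t) * (Real.log t - L) ^ 2
      = I2 - 2 * L * I1 + L ^ 2 := by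
  have h2 := int_log_sq_exp
  have h1 := (int_log_exp.const_mul (2 * L))
  have h0 := (int_exp.const_mul (L ^ 2))
  have hint : ∀ t : ℝ, Real.exp (-t) * (Real.log t - L) ^ 2
      = (Real.log t) ^ 2 * Real.exp (-t)
        - (2 * L) * (Real.log t * Real.exp (-t)) + (L ^ 2) * Real.exp (-t) := by
    intro t; ring
  simp_rw [hint]
  have h21 : Integrable (fun t => (Real.log t) ^ 2 * Real.exp (-t)
      - (2 * L) * (Real.log t * Real.exp (-t))) (volume.restrict (Ioi 0)) := h2.sub h1
  rw [integral_add h21 h0, integral_sub h2 h1, integral_const_mul, integral_const_mul,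
    integral_exp_neg, I1, I2]
  ring

private lemma exp_integral (r : ℝ) (hr : 0 < r) :
    ∫ x in Ioi (0:ℝ), r * Real.exp (-(r * x)) * (Real.log x) ^ 2
      = (Real.log r + Real.eulerMascheroniConstant) ^ 2 + π ^ 2 / 6 := by
  set g : ℝ → ℝ := fun u => Real.exp (-u) * (Real.log u - Real.log r) ^ 2 with hg
  have hcongr : ∀ x ∈ Ioi (0:ℝ), r * Real.exp (-(r * x)) * (Real.log x) ^ 2 = r * g (r * x) := by
    intro x hx
    have hx' : (0:ℝ) < x := hx
    simp only [hg]
    rw [Real.log_mul hr.ne' hx'.ne']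
    ring_nf
  rw [setIntegral_congr_fun measurableSet_Ioi hcongr, integral_const_mul,
    MeasureTheory.integral_comp_mul_left_Ioi g 0 hr]
  rw [mul_zero, smul_eq_mul, ← mul_assoc, mul_inv_cancel₀ hr.ne', one_mul]
  rw [hg, key_integral, I1_eq, I2_eq]
  ring

end

/-- If `ξ` is exponentially distributed with mean `e^γ / c` (`c > 0`, `γ` the
Euler–Mascheroni constant), then `E[(log ξ)²] = (log c)² + π²/6`. -/
theorem stmt_6 {Ω : Type*} [MeasureSpace Ω] (μ : Measure Ω) [IsProbabilityMeasure μ]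
    (ξ : Ω → ℝ) (c : ℝ) (hc : 0 < c)
    (hξ : Measure.map ξ μ = expMeasure (c * Real.exp (-Real.eulerMascheroniConstant))) :
    ∫ ω, (Real.log (ξ ω)) ^ 2 ∂μ = (Real.log c) ^ 2 + π ^ 2 / 6 := by
  set r := c * Real.exp (-Real.eulerMascheroniConstant) with hrdef
  have hr : 0 < r := by positivity
  have hprob : IsProbabilityMeasure (expMeasure r) := isProbabilityMeasure_expMeasure hr
  have hae : AEMeasurable ξ μ := by
    by_contra h
    rw [Measure.map_of_not_aemeasurable h] at hξ
    have h1 : expMeasure r Set.univ = 1 := hprob.measure_univ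
    rw [← hξ] at h1
    simp at h1
  have hmeas : AEStronglyMeasurable (fun x : ℝ => (Real.log x) ^ 2) (Measure.map ξ μ) :=
    ((Real.measurable_log.pow_const 2)).aestronglyMeasurable
  rw [← integral_map hae hmeas, hξ]
  have hexp : expMeasure r = volume.withDensity
      (fun x => ((Real.toNNReal (exponentialPDFReal r x) : ℝ≥0) : ℝ≥0∞)) := rfl
  rw [hexp, integral_withDensity_eq_integral_smul (measurable_exponentialPDFReal r).real_toNNReal]
  have hsmul : ∀ x : ℝ, (Real.toNNReal (exponentialPDFReal r x)) • (Real.log x) ^ 2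
      = exponentialPDFReal r x * (Real.log x) ^ 2 := by
    intro x
    rw [NNReal.smul_def, Real.coe_toNNReal _ (exponentialPDFReal_nonneg hr x), smul_eq_mul]
  simp_rw [hsmul]
  rw [← setIntegral_eq_integral_of_forall_compl_eq_zero
    (s := Ioi (0:ℝ)) (fun x hx => ?_)]
  · rw [setIntegral_congr_fun measurableSet_Ioi
      (g := fun x => r * Real.exp (-(r * x)) * (Real.log x) ^ 2) (fun x hx => ?_)]
    · rw [exp_integral r hr, hrdef, Real.log_mul hc.ne' (Real.exp_pos _).ne', Real.log_exp]
      ring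
    · have hx' : (0:ℝ) < x := hx
      simp only [exponentialPDFReal, gammaPDFReal, if_pos hx'.le, Real.rpow_one,
        Real.Gamma_one, div_one, sub_self, Real.rpow_zero, mul_one]
  · rcases eq_or_lt_of_le (not_lt.mp (fun hlt => hx hlt) : x ≤ 0) with h0 | hneg
    · rw [h0, Real.log_zero]
      ring
    · simp only [exponentialPDFReal, gammaPDFReal, if_neg (not_le.mpr hneg), zero_mul]
end
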